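/- Let H be a real Hilbert space, I = {1,...,n}, μ > 0, and for each i ∈ I let λ_i > 0 with Σ_{i∈I} λ_i = 1 and let A_i : H ⇉ H be an arbitrary set-valued mapping. Then the inverse of the resolvent average satisfies (R_μ(A, λ))⁻¹ = R_{μ⁻¹}(A⁻¹, λ), where A⁻¹ = (A₁⁻¹, ..., A_n⁻¹). -/
import Mathlib


open RealInnerProductSpace

namespace SVP

variable {H : Type*} [NormedAddCommGroup H] [InnerProductSpace ℝ H]

/-- Inverse of a set-valued mapping: `x ∈ inv A u ↔ u ∈ A x`. -/
def inv (A : H → Set H) : H → Set H := fun u => {x | u ∈ A x}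

/-- Pointwise (Minkowski) sum of two set-valued mappings. -/
def add (A B : H → Set H) : H → Set H := fun x => {w | ∃ u ∈ A x, ∃ v ∈ B x, w = u + v}

/-- Pointwise difference of two set-valued mappings. -/
def sub (A B : H → Set H) : H → Set H := fun x => {w | ∃ u ∈ A x, ∃ v ∈ B x, w = u - v}

/-- Pointwise scalar multiple of a set-valued mapping. -/
def smul (c : ℝ) (A : H → Set H) : H → Set H := fun x => (fun u => c • u) '' A x

/-- The identity as a set-valued mapping. -/
def id' : H → Set H := fun x => {x}

/-- Composition of set-valued mappings: `(comp A B) x = ⋃ y ∈ B x, A y`. -/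
def comp (A B : H → Set H) : H → Set H := fun x => ⋃ y ∈ B x, A y

/-- Weighted pointwise (Minkowski) combination `Σ_i lam i • (B i)`. -/
def lcomb {n : ℕ} (lam : Fin n → ℝ) (B : Fin n → H → Set H) : H → Set H :=
  fun x => {u | ∃ v : Fin n → H, (∀ i, v i ∈ B i x) ∧ u = ∑ i, lam i • v i}

/-- The `λ`-weighted resolvent average with parameter `μ`:
`R_μ(A, λ) = (Σ_i λ_i (A_i + μ⁻¹ Id)⁻¹)⁻¹ − μ⁻¹ Id`. -/
def resAvg {n : ℕ} (μ : ℝ) (lam : Fin n → ℝ) (A : Fin n → H → Set H) : H → Set H :=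
  sub (inv (lcomb lam (fun i => inv (add (A i) (smul μ⁻¹ id'))))) (smul μ⁻¹ id')

/-- Monotonicity of a set-valued mapping. -/
def IsMonotone (A : H → Set H) : Prop :=
  ∀ ⦃x y u v : H⦄, u ∈ A x → v ∈ A y → 0 ≤ ⟪x - y, u - v⟫

/-- Maximal monotonicity: the graph is not properly contained in the graph of
another monotone mapping. -/
def IsMaxMonotone (A : H → Set H) : Prop :=
  IsMonotone A ∧ ∀ B : H → Set H, IsMonotone B → (∀ x, A x ⊆ B x) → ∀ x, B x ⊆ A x

/-- Domain of a set-valued mapping. -/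
def dom (A : H → Set H) : Set H := {x | (A x).Nonempty}

/-- Range of a set-valued mapping. -/
def ran (A : H → Set H) : Set H := {u | ∃ x, u ∈ A x}

/-- Graph of a set-valued mapping. -/
def graph (A : H → Set H) : Set (H × H) := {p | p.2 ∈ A p.1}

end SVP

variable {H : Type*} [NormedAddCommGroup H] [InnerProductSpace ℝ H] [CompleteSpace H]


lemma mem_resAvg' {n : ℕ} (μ : ℝ) (lam : Fin n → ℝ) (A : Fin n → H → Set H) (x w : H) :
    w ∈ SVP.resAvg μ lam A x ↔ ∃ v a : Fin n → H, (∀ i, a i ∈ A i (v i)) ∧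
      (∀ i, w + μ⁻¹ • x = a i + μ⁻¹ • v i) ∧ x = ∑ i, lam i • v i := by
  simp only [SVP.resAvg, SVP.sub, SVP.inv, SVP.lcomb, SVP.add, SVP.smul, SVP.id',
    Set.mem_setOf_eq, Set.image_singleton, Set.mem_singleton_iff, exists_eq_left]
  constructor
  · rintro ⟨u, ⟨v, hv, hx⟩, hw⟩
    choose a ha hu using hv
    refine ⟨v, a, ha, fun i => ?_, hx⟩
    rw [hw, sub_add_cancel]; exact hu i
  · rintro ⟨v, a, h1, h2, h3⟩
    exact ⟨w + μ⁻¹ • x, ⟨v, fun i => ⟨a i, h1 i, h2 i⟩, h3⟩, by abel⟩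

lemma swap_aux' {n : ℕ} {μ : ℝ} (hμ : μ ≠ 0) {lam : Fin n → ℝ} (hsum : ∑ i, lam i = 1)
    {x w : H} (v a : Fin n → H) (h2 : ∀ i, w + μ⁻¹ • x = a i + μ⁻¹ • v i)
    (h3 : x = ∑ i, lam i • v i) :
    (∀ i, x + μ • w = v i + μ • a i) ∧ w = ∑ i, lam i • a i := by
  constructor
  · intro i
    have h := congrArg (μ • ·) (h2 i)
    simp only [smul_add, smul_smul, mul_inv_cancel₀ hμ, one_smul] at h
    rw [add_comm x, h, add_comm]
  · have ha : ∀ i, a i = w + μ⁻¹ • x - μ⁻¹ • v i :=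
      fun i => eq_sub_of_add_eq (h2 i).symm
    have key : ∑ i, lam i • a i = w := by
      calc ∑ i, lam i • a i
          = ∑ i, (lam i • (w + μ⁻¹ • x) - μ⁻¹ • (lam i • v i)) := by
            refine Finset.sum_congr rfl fun i _ => ?_
            rw [ha i, smul_sub, smul_comm]
        _ = (∑ i, lam i) • (w + μ⁻¹ • x) - μ⁻¹ • ∑ i, lam i • v i := by
            rw [Finset.sum_sub_distrib, ← Finset.sum_smul, Finset.smul_sum]
        _ = w := by rw [hsum, one_smul, ← h3]; abel
    exact key.symm

/-- Inversion formula for the resolvent average: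
`(R_μ(A, λ))⁻¹ = R_{μ⁻¹}(A⁻¹, λ)`. -/
theorem stmt2 {n : ℕ} (hn : 0 < n) {μ : ℝ} (hμ : 0 < μ) (lam : Fin n → ℝ)
    (hpos : ∀ i, 0 < lam i) (hsum : ∑ i, lam i = 1) (A : Fin n → H → Set H) :
    SVP.inv (SVP.resAvg μ lam A) = SVP.resAvg μ⁻¹ lam (fun i => SVP.inv (A i)) := by
  have hμ' : μ ≠ 0 := hμ.ne'
  funext w
  ext x
  show w ∈ SVP.resAvg μ lam A x ↔ _
  rw [mem_resAvg', mem_resAvg']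
  constructor
  · rintro ⟨v, a, h1, h2, h3⟩
    obtain ⟨h2', h3'⟩ := swap_aux' hμ' hsum v a h2 h3
    exact ⟨a, v, fun i => h1 i, fun i => by rw [inv_inv]; exact h2' i, h3'⟩
  · rintro ⟨v, a, h1, h2, h3⟩
    obtain ⟨h2', h3'⟩ := swap_aux' (inv_ne_zero hμ') hsum v a h2 h3
    exact ⟨a, v, fun i => h1 i, fun i => h2' i, h3'⟩
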